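/- Let C be an [n,k]-linear code over F_q with k ≥ 2 and n ≥ 2. For 2 ≤ r ≤ k-1, the r-minimal pair weights satisfy the strict inequality d_p^{r-1}(C) < d_p^r(C). -/

import Mathlib

/-- The pair support of a subspace `D ≤ F^n` (indices mod `n`). -/
def pairSupport {F : Type*} [Field F] {n : ℕ} [NeZero n] (D : Submodule F (Fin n → F)) :
    Set (Fin n) :=
  {i | ∃ x ∈ D, x i ≠ 0 ∨ x (i + 1) ≠ 0}

/-- The `r`-minimal pair weight `d_p^r(C)` of a linear code `C ≤ F^n`. -/
noncomputable def dp {F : Type*} [Field F] {n : ℕ} [NeZero n]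
    (C : Submodule F (Fin n → F)) (r : ℕ) : ℕ :=
  sInf {m | ∃ D : Submodule F (Fin n → F), D ≤ C ∧ Module.finrank F D = r ∧
    (pairSupport D).ncard = m}

open Module Set

section Aux

variable {F : Type*} [Field F] {n : ℕ} [NeZero n]

lemma exists_submodule_finrank_eq' {V : Type*} [AddCommGroup V] [Module F V]
    [FiniteDimensional F V] {m : ℕ} (h : m ≤ finrank F V) :
    ∃ W : Submodule F V, finrank F W = m := by
  obtain ⟨s, hcard, hli⟩ := exists_finset_linearIndependent_of_le_finrank h
  exact ⟨Submodule.span F (s : Set V), by rw [finrank_span_finset_eq_card hli, hcard]⟩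

/-- Projection onto a pair of consecutive coordinates, restricted to `D`. -/
noncomputable def pairProj (D : Submodule F (Fin n → F)) (i : Fin n) :
    D →ₗ[F] F × F :=
  ((LinearMap.proj i).comp D.subtype).prod ((LinearMap.proj (i + 1)).comp D.subtype)

@[simp] lemma pairProj_apply (D : Submodule F (Fin n → F)) (i : Fin n) (x : D) :
    pairProj D i x = ((x : Fin n → F) i, (x : Fin n → F) (i + 1)) := rfl

/-- The subspace of `D` vanishing on coordinates `i` and `i+1`. -/
noncomputable def pairKer (D : Submodule F (Fin n → F)) (i : Fin n) :
    Submodule F (Fin n → F) :=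
  (LinearMap.ker (pairProj D i)).map D.subtype

lemma mem_pairKer {D : Submodule F (Fin n → F)} {i : Fin n} {x : Fin n → F} :
    x ∈ pairKer D i ↔ x ∈ D ∧ x i = 0 ∧ x (i + 1) = 0 := by
  constructor
  · rintro ⟨y, hy, rfl⟩
    have : pairProj D i y = 0 := hy
    rw [pairProj_apply, Prod.mk_eq_zero] at this
    exact ⟨y.2, this⟩
  · rintro ⟨hxD, h1, h2⟩
    exact ⟨⟨x, hxD⟩, by simp [LinearMap.mem_ker, Prod.mk_eq_zero, h1, h2], rfl⟩

lemma pairKer_le (D : Submodule F (Fin n → F)) (i : Fin n) : pairKer D i ≤ D :=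
  Submodule.map_subtype_le _ _

lemma finrank_pairKer (D : Submodule F (Fin n → F)) (i : Fin n) :
    finrank F (pairKer D i) = finrank F (LinearMap.ker (pairProj D i)) :=
  Submodule.finrank_map_subtype_eq _ _

lemma pairSupport_mono {D E : Submodule F (Fin n → F)} (h : E ≤ D) :
    pairSupport E ⊆ pairSupport D := by
  rintro i ⟨x, hx, hx'⟩
  exact ⟨x, h hx, hx'⟩

lemma not_mem_pairSupport_pairKer (D : Submodule F (Fin n → F)) (i : Fin n) :
    i ∉ pairSupport (pairKer D i) := by
  rintro ⟨x, hx, hx'⟩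
  obtain ⟨-, h1, h2⟩ := mem_pairKer.mp hx
  rcases hx' with h | h <;> [exact h h1; exact h h2]

open Fin.NatCast in
/-- A nonempty subset of `Fin n` closed under `+1` is everything. -/
lemma succ_closed_eq_univ {S : Set (Fin n)} (hne : S.Nonempty)
    (hsucc : ∀ i ∈ S, i + 1 ∈ S) : S = univ := by
  obtain ⟨j, hj⟩ := hne
  have key : ∀ m : ℕ, j + (m : Fin n) ∈ S := by
    intro m
    induction m with
    | zero => simpa using hj
    | succ m ih =>
        have : ((m + 1 : ℕ) : Fin n) = (m : Fin n) + 1 := by push_cast; ring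
        rw [this, ← add_assoc]
        exact hsucc _ ih
  ext i
  simp only [mem_univ, iff_true]
  have := key ((i - j).val)
  rwa [Fin.cast_val_eq_self, add_sub_cancel] at this

end Aux

theorem dp_strict_mono {F : Type*} [Field F] [Fintype F] {n k : ℕ} [NeZero n]
    (hn : 2 ≤ n) (C : Submodule F (Fin n → F)) (hC : Module.finrank F C = k)
    (hk : 2 ≤ k) (r : ℕ) (hr : 2 ≤ r) (hr' : r ≤ k - 1) :
    dp C (r - 1) < dp C r := by
  classical
  -- the defining sets
  set S : ℕ → Set ℕ := fun s => {m | ∃ D : Submodule F (Fin n → F), D ≤ C ∧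
    Module.finrank F D = s ∧ (pairSupport D).ncard = m} with hS
  have hdp : ∀ s, dp C s = sInf (S s) := fun s => rfl
  -- nonemptiness for r
  have hrk : r ≤ finrank F C := by rw [hC]; omega
  obtain ⟨W, hW⟩ := exists_submodule_finrank_eq' (F := F) hrk
  have hne : (S r).Nonempty :=
    ⟨(pairSupport (W.map C.subtype)).ncard, W.map C.subtype, Submodule.map_subtype_le _ _,
      by rw [Submodule.finrank_map_subtype_eq, hW], rfl⟩
  obtain ⟨D, hDC, hDr, hDw⟩ := Nat.sInf_mem hne
  rw [hdp, hdp, ← hDw]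
  -- a generic bound: any suitable E gives dp C (r-1) ≤ ncard of its pair support
  have hle : ∀ E : Submodule F (Fin n → F), E ≤ C → finrank F E = r - 1 →
      sInf (S (r - 1)) ≤ (pairSupport E).ncard := fun E h1 h2 =>
    Nat.sInf_le ⟨E, h1, h2, rfl⟩
  by_cases hA : ∃ i ∈ pairSupport D, finrank F (pairKer D i) = r - 1
  · obtain ⟨i, hi, hrank⟩ := hA
    refine lt_of_le_of_lt (hle _ ((pairKer_le D i).trans hDC) hrank) ?_
    refine Set.ncard_lt_ncard ?_ (toFinite _)
    exact ⟨pairSupport_mono (pairKer_le D i),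
      fun h => not_mem_pairSupport_pairKer D i (h hi)⟩
  · -- pair support of D is closed under succ, hence everything
    push_neg at hA
    have hsucc : ∀ i ∈ pairSupport D, i + 1 ∈ pairSupport D := by
      intro i hi
      by_contra hnot
      have hz : ∀ x ∈ D, x (i + 1) = 0 := by
        intro x hx
        by_contra hxne
        exact hnot ⟨x, hx, Or.inl hxne⟩
      -- then pairProj D i has rank exactly 1
      have hrange_le : LinearMap.range (pairProj D i) ≤ LinearMap.range (LinearMap.inl F F F) := by
        rintro p ⟨x, rfl⟩
        exact ⟨(x : Fin n → F) i, by simp [hz x.1 x.2]⟩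
      have hfr1 : finrank F (LinearMap.range (LinearMap.inl F F F)) = 1 := by
        rw [LinearMap.finrank_range_of_inj LinearMap.inl_injective, finrank_self]
      have hle1 : finrank F (LinearMap.range (pairProj D i)) ≤ 1 :=
        hfr1 ▸ Submodule.finrank_mono hrange_le
      have hge1 : LinearMap.range (pairProj D i) ≠ ⊥ := by
        obtain ⟨x, hxD, hx⟩ := hi
        have hxi : x i ≠ 0 := by
          rcases hx with h | h
          · exact h
          · exact absurd (hz x hxD) h
        intro hbot
        have : pairProj D i ⟨x, hxD⟩ ∈ LinearMap.range (pairProj D i) :=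
          LinearMap.mem_range_self _ _
        rw [hbot, Submodule.mem_bot, pairProj_apply, Prod.mk_eq_zero] at this
        exact hxi this.1
      have hpos : finrank F (LinearMap.range (pairProj D i)) ≠ 0 := fun h =>
        hge1 (Submodule.finrank_eq_zero.mp h)
      have heq1 : finrank F (LinearMap.range (pairProj D i)) = 1 := by omega
      have hrn := LinearMap.finrank_range_add_finrank_ker (pairProj D i)
      rw [hDr, heq1] at hrn
      exact hA i hi (by rw [finrank_pairKer]; omega)
    have hDne : (pairSupport D).Nonempty := by
      have : D ≠ ⊥ := by
        intro h
        rw [h, finrank_bot] at hDr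
        omega
      obtain ⟨x, hxD, hxne⟩ := Submodule.exists_mem_ne_zero_of_ne_bot this
      obtain ⟨j, hj⟩ := Function.ne_iff.mp hxne
      exact ⟨j, x, hxD, Or.inl (by simpa using hj)⟩
    have huniv : pairSupport D = univ := succ_closed_eq_univ hDne hsucc
    have hcardD : (pairSupport D).ncard = n := by
      rw [huniv, ncard_univ, Nat.card_eq_fintype_card, Fintype.card_fin]
    -- build an (r-1)-dimensional subspace avoiding coordinate 0
    have hKrank : r - 1 ≤ finrank F (pairKer C 0) := by
      have hrn := LinearMap.finrank_range_add_finrank_ker (pairProj C 0)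
      have h2 : finrank F (LinearMap.range (pairProj C 0)) ≤ 2 := by
        have := Submodule.finrank_le (LinearMap.range (pairProj C 0))
        simpa using this
      rw [hC] at hrn
      rw [finrank_pairKer]
      omega
    obtain ⟨W', hW'⟩ := exists_submodule_finrank_eq' (F := F) hKrank
    set E := W'.map (pairKer C 0).subtype with hE
    have hEle : E ≤ pairKer C 0 := Submodule.map_subtype_le _ _
    have hEC : E ≤ C := hEle.trans (pairKer_le C 0)
    have hEr : finrank F E = r - 1 := by
      rw [hE, Submodule.finrank_map_subtype_eq, hW']
    refine lt_of_le_of_lt (hle E hEC hEr) ?_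
    rw [hcardD]
    have hlt : pairSupport E ⊂ univ := by
      rw [ssubset_univ_iff]
      intro h
      have : (0 : Fin n) ∈ pairSupport E := h ▸ mem_univ _
      exact not_mem_pairSupport_pairKer C 0 (pairSupport_mono hEle this)
    calc (pairSupport E).ncard < (univ : Set (Fin n)).ncard :=
          Set.ncard_lt_ncard hlt (toFinite _)
      _ = n := by rw [ncard_univ, Nat.card_eq_fintype_card, Fintype.card_fin]
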